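/- For all real numbers a, b ≥ 0 and every real r ≥ 2, the inequality |a - b|^r - a^r - b^r ≥ -r(a·b^{r-1} + a^{r-1}·b) holds. -/
import Mathlib

lemma key_aux (a b r : ℝ) (hb : 0 ≤ b) (hab : b ≤ a) (hr : 2 ≤ r) :
    (a - b) ^ r ≥ a ^ r + b ^ r - r * (a * b ^ (r - 1) + a ^ (r - 1) * b) := by
  have ha : 0 ≤ a := hb.trans hab
  have hr1 : (1:ℝ) ≤ r := by linarith
  rcases eq_or_lt_of_le ha with h0 | h0
  · have hb0 : b = 0 := le_antisymm (hab.trans h0.ge) hb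
    subst hb0
    rw [← h0]
    simp [Real.zero_rpow (by linarith : r ≠ 0)]
  · -- a > 0
    have hs : (-1:ℝ) ≤ -(b / a) := by
      have : b / a ≤ 1 := (div_le_one h0).mpr hab
      linarith
    have hbern := one_add_mul_self_le_rpow_one_add hs hr1
    have har : (0:ℝ) ≤ a ^ r := Real.rpow_nonneg ha r
    have h1 : a ^ r - r * (a ^ (r - 1) * b) ≤ (a - b) ^ r := by
      have hmul := mul_le_mul_of_nonneg_left hbern har
      have hq : (0:ℝ) ≤ 1 + -(b/a) := by linarith
      rw [← Real.mul_rpow ha hq] at hmul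
      have he : a * (1 + -(b / a)) = a - b := by field_simp; ring
      rw [he] at hmul
      have hpow : a ^ r * (b / a) = a ^ (r - 1) * b := by
        rw [Real.rpow_sub h0, Real.rpow_one]
        field_simp
      calc a ^ r - r * (a ^ (r - 1) * b) = a ^ r * (1 + r * -(b / a)) := by
            rw [← hpow]; ring
        _ ≤ (a - b) ^ r := hmul
    have h2 : b ^ r ≤ r * (a * b ^ (r - 1)) := by
      have hb1 : b ^ r = b * b ^ (r - 1) := by
        rw [← Real.rpow_one_add' hb (by linarith : 1 + (r - 1) ≠ 0)]
        ring_nf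
      have hbr : (0:ℝ) ≤ b ^ (r - 1) := Real.rpow_nonneg hb _
      calc b ^ r = b * b ^ (r - 1) := hb1
        _ ≤ a * b ^ (r - 1) := mul_le_mul_of_nonneg_right hab hbr
        _ ≤ r * (a * b ^ (r - 1)) := le_mul_of_one_le_left (by positivity) hr1
    linarith

theorem stmt_0 (a b r : ℝ) (ha : 0 ≤ a) (hb : 0 ≤ b) (hr : 2 ≤ r) :
    |a - b| ^ r - a ^ r - b ^ r ≥ -(r * (a * b ^ (r - 1) + a ^ (r - 1) * b)) := by
  rcases le_total b a with h | h
  · rw [abs_of_nonneg (by linarith)]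
    have := key_aux a b r hb h hr
    linarith
  · rw [abs_of_nonpos (by linarith), neg_sub]
    have := key_aux b a r ha h hr
    linarith
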